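/- Let A ∈ ℝⁿˣⁿ be symmetric positive definite, let s ∈ ℝⁿ be nonzero and set y = As. Then for every m ∈ (0,1], αPBB(m) = [(2m−1)sᵀy + √((2m−1)²(sᵀy)² − 4m(m−1)(sᵀs)(yᵀy))] / (2m·sᵀs) satisfies αPBB(m) ≥ (sᵀAs)/(sᵀs), i.e. αPBB is bounded below by the Rayleigh quotient of s with respect to A. -/

import Mathlib

open Matrix

/-- For `y = As` with `A` SPD, `αPBB(m)` is bounded below by the Rayleigh quotient. -/
theorem stmt_6 {n : ℕ} (A : Matrix (Fin n) (Fin n) ℝ)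
    (hsymm : A.IsSymm) (hpd : A.PosDef)
    (s : Fin n → ℝ) (hs : s ≠ 0) (y : Fin n → ℝ) (hy : y = A.mulVec s)
    (m : ℝ) (hm0 : 0 < m) (hm1 : m ≤ 1) :
    (s ⬝ᵥ A.mulVec s) / (s ⬝ᵥ s) ≤
      ((2*m - 1) * (s ⬝ᵥ y) +
        Real.sqrt ((2*m - 1)^2 * (s ⬝ᵥ y)^2 - 4*m*(m - 1) * (s ⬝ᵥ s) * (y ⬝ᵥ y))) /
      (2*m * (s ⬝ᵥ s)) := by
  have hp : 0 < s ⬝ᵥ s := by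
    have : s ⬝ᵥ s = ∑ i, s i * s i := rfl
    rcases Function.ne_iff.mp hs with ⟨i, hi⟩
    rw [this]
    apply Finset.sum_pos' (fun j _ => mul_self_nonneg _)
    exact ⟨i, Finset.mem_univ i, mul_self_pos.mpr hi⟩
  have hq : 0 < s ⬝ᵥ y := by
    have := hpd.dotProduct_mulVec_pos hs
    simpa [hy] using this
  have hCS : (s ⬝ᵥ y)^2 ≤ (s ⬝ᵥ s) * (y ⬝ᵥ y) := by
    have h := Finset.sum_mul_sq_le_sq_mul_sq Finset.univ s y
    simpa [dotProduct, sq] using h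
  set q := s ⬝ᵥ y with hqdef
  set p := s ⬝ᵥ s with hpdef
  set r := y ⬝ᵥ y with hrdef
  have hmm : m * (m - 1) ≤ 0 := mul_nonpos_of_nonneg_of_nonpos hm0.le (by linarith)
  have hD : q^2 ≤ (2*m - 1)^2 * q^2 - 4*m*(m - 1) * p * r := by
    nlinarith [mul_nonneg (neg_nonneg.mpr hmm) (sub_nonneg.mpr hCS)]
  have hsq : q ≤ Real.sqrt ((2*m - 1)^2 * q^2 - 4*m*(m - 1) * p * r) := by
    have := Real.sqrt_le_sqrt hD
    rwa [Real.sqrt_sq hq.le] at this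
  rw [div_le_div_iff₀ hp (by positivity)]
  have : s ⬝ᵥ A.mulVec s = q := by rw [hqdef, hy]
  rw [this]
  nlinarith [hsq, hp, hq]
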